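/- arXiv:2210.06378 — 2 statements merged into one kernel-verified Lean document; each statement's English description precedes it below -/
import Mathlib

section
/- Let S be a set of n ≥ 2 generators, d ∈ (0,1), and λ ∈ (0,1) with ⌈λ·2n⌉ − 1 > 0 and (2n−1)^d ≥ 2/λ. If a language 𝓛 of reduced words over S has growth rate at least ⌈λ·2n⌉ − 1, then the probability that a random set of relators at density d and length L contains at least one element of 𝓛 tends to 1 as L → ∞. -/
open Filter Topology

/-- The symmetrized alphabet `S ∪ S⁻¹` for a set `S` of `n` generators. -/
abbrev Letter (n : ℕ) := Fin n × Bool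

/-- The formal inverse of a letter. -/
def linv {n : ℕ} (a : Letter n) : Letter n := (a.1, !a.2)

/-- A word is reduced if no two consecutive letters are inverse to each other. -/
def Reduced {n : ℕ} (w : List (Letter n)) : Prop :=
  w.Chain' fun a b => b ≠ linv a

/-- The set of all reduced words of length `L` over `n` generators. -/
def RW (n L : ℕ) : Set (List (Letter n)) :=
  {w | w.length = L ∧ Reduced w}

lemma rw_finite (n l : ℕ) : (RW n l).Finite :=
  (List.finite_length_eq (Letter n) l).subset fun _ hw => hw.1

lemma rw_nonempty (n l : ℕ) (hn : 1 ≤ n) : (RW n l).Nonempty := by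
  refine ⟨List.replicate l (⟨0, hn⟩, true), List.length_replicate .., ?_⟩
  exact List.isChain_replicate_of_rel l (by simp [linv])

lemma rw_card_pos (n l : ℕ) (hn : 1 ≤ n) : 0 < Nat.card ↥(RW n l) :=
  Nat.card_pos_iff.mpr ⟨(rw_nonempty n l hn).to_subtype, (rw_finite n l).to_subtype⟩

lemma rw_card_le (n l : ℕ) : Nat.card ↥(RW n l) ≤ (2 * n) ^ l := by
  have hinj : Function.Injective
      (fun w : ↥(RW n l) => fun i : Fin l => w.1.get (Fin.cast w.2.1.symm i)) := by
    intro w w' h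
    ext1
    refine List.ext_get (w.2.1.trans w'.2.1.symm) fun i h1 h2 => ?_
    have hl : i < l := w.2.1 ▸ h1
    have := congrFun h ⟨i, hl⟩
    simpa using this
  calc Nat.card ↥(RW n l) ≤ Nat.card (Fin l → Letter n) :=
        Nat.card_le_card_of_injective _ hinj
    _ = (2 * n) ^ l := by
        simp [Nat.card_eq_fintype_card, Fintype.card_fun, mul_comm]

lemma key_count {α : Type*} [Finite α] (N : ℕ) (P : α → Prop) :
    Nat.card {f : Fin N → α // ∃ i, P (f i)} + (Nat.card {a : α // ¬ P a}) ^ N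
      = (Nat.card α) ^ N := by
  classical
  cases nonempty_fintype α
  have e : {f : Fin N → α // ¬ ∃ i, P (f i)} ≃ (Fin N → {a : α // ¬ P a}) :=
    { toFun := fun f i => ⟨f.1 i, fun hp => f.2 ⟨i, hp⟩⟩
      invFun := fun g => ⟨fun i => (g i).1, fun ⟨i, hp⟩ => (g i).2 hp⟩
      left_inv := fun f => rfl
      right_inv := fun g => rfl }
  have h1 : Fintype.card {f : Fin N → α // ¬ ∃ i, P (f i)}
      = (Nat.card {a : α // ¬ P a}) ^ N := by
    rw [Fintype.card_congr e]
    simp [Nat.card_eq_fintype_card]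
  have h2 := Fintype.card_subtype_compl (fun f : Fin N → α => ∃ i, P (f i))
  have h3 := Fintype.card_subtype_le (fun f : Fin N → α => ∃ i, P (f i))
  have h4 : Fintype.card (Fin N → α) = (Nat.card α) ^ N := by
    simp [Nat.card_eq_fintype_card]
  have h5 : Fintype.card {f : Fin N → α // ∃ i, P (f i)}
      + Fintype.card {f : Fin N → α // ¬ ∃ i, P (f i)} = Fintype.card (Fin N → α) := by
    rw [h2]; exact Nat.add_sub_cancel' h3
  rw [Nat.card_eq_fintype_card, ← h1, ← h4, ← h5]

lemma card_mem_eq (n l : ℕ) (L : Set (List (Letter n))) :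
    Nat.card {w : ↥(RW n l) // ↑w ∈ L} = Nat.card ↥(L ∩ RW n l) := by
  apply Nat.card_congr
  exact { toFun := fun w => ⟨w.1.1, w.2, w.1.2⟩
          invFun := fun w => ⟨⟨w.1, w.2.2⟩, w.2.1⟩
          left_inv := fun _ => rfl
          right_inv := fun _ => rfl }

lemma card_split (n l : ℕ) (L : Set (List (Letter n))) :
    Nat.card {w : ↥(RW n l) // ↑w ∈ L} + Nat.card {w : ↥(RW n l) // ↑w ∉ L}
      = Nat.card ↥(RW n l) := by
  classical
  have : Fintype ↥(RW n l) := (rw_finite n l).fintype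
  have h2 := Fintype.card_subtype_compl (fun w : ↥(RW n l) => ↑w ∈ L)
  have h3 := Fintype.card_subtype_le (fun w : ↥(RW n l) => ↑w ∈ L)
  simp only [Nat.card_eq_fintype_card]
  rw [h2]; exact Nat.add_sub_cancel' h3


/-- The number `⌊(2n-1)^(dL)⌋` of relators in a random set of relators at density `d`
and length `L`. -/
noncomputable def numRelators (n : ℕ) (d : ℝ) (L : ℕ) : ℕ :=
  ⌊(2 * (n : ℝ) - 1) ^ (d * (L : ℝ))⌋₊

/-- The probability that a `⌊(2n-1)^(dL)⌋`-tuple of reduced words of length `l`,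
chosen independently and uniformly at random, contains at least one element of `L`. -/
noncomputable def hitProb (n : ℕ) (d : ℝ) (L : Set (List (Letter n))) (l : ℕ) : ℝ :=
  (Nat.card {f : Fin (numRelators n d l) → ↥(RW n l) // ∃ i, (f i : List (Letter n)) ∈ L} : ℝ) /
    (Nat.card ↥(RW n l) : ℝ) ^ (numRelators n d l)

lemma hitProb_eq (n : ℕ) (hn : 1 ≤ n) (d : ℝ) (L : Set (List (Letter n))) (l : ℕ) :
    hitProb n d L l =
      1 - ((Nat.card {w : ↥(RW n l) // ↑w ∉ L} : ℝ) / (Nat.card ↥(RW n l) : ℝ))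
          ^ (numRelators n d l) := by
  have hfin : Finite ↥(RW n l) := (rw_finite n l).to_subtype
  have hR : (0:ℝ) < Nat.card ↥(RW n l) := by exact_mod_cast rw_card_pos n l hn
  have hkey := key_count (numRelators n d l) (fun w : ↥(RW n l) => ↑w ∈ L)
  have hcast : (Nat.card {f : Fin (numRelators n d l) → ↥(RW n l) //
        ∃ i, (f i : List (Letter n)) ∈ L} : ℝ)
      = (Nat.card ↥(RW n l) : ℝ) ^ (numRelators n d l)
        - (Nat.card {w : ↥(RW n l) // ↑w ∉ L} : ℝ) ^ (numRelators n d l) := by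
    have := congrArg (Nat.cast : ℕ → ℝ) hkey
    push_cast at this
    linarith
  unfold hitProb
  rw [hcast, div_pow, sub_div, div_self (pow_ne_zero _ hR.ne')]

/-- Suppose `⌈λ·2n⌉ - 1 > 0` and `(2n-1)^d ≥ 2/λ` for some `λ ∈ (0,1)`. If a language of
reduced words has growth rate at least `⌈λ·2n⌉ - 1`, then a random set of relators at
density `d` intersects it with probability tending to `1`. -/
theorem random_relators_meet_language_ceil (n : ℕ) (hn : 2 ≤ n)
    (d : ℝ) (hd : d ∈ Set.Ioo (0 : ℝ) 1)
    (lam : ℝ) (hlam : lam ∈ Set.Ioo (0 : ℝ) 1)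
    (hpos : 0 < ⌈lam * (2 * (n : ℝ))⌉₊ - 1)
    (hdens : (2 : ℝ) / lam ≤ (2 * (n : ℝ) - 1) ^ (d : ℝ))
    (L : Set (List (Letter n))) (hred : ∀ w ∈ L, Reduced w)
    (c : ℝ) (hc : 0 < c)
    (hgrowth : ∀ᶠ l : ℕ in atTop,
      c * ((⌈lam * (2 * (n : ℝ))⌉₊ - 1 : ℕ) : ℝ) ^ l ≤ (Nat.card ↥(L ∩ RW n l) : ℝ)) :
    Tendsto (hitProb n d L) atTop (𝓝 1) := by
  obtain ⟨hd0, hd1⟩ := hd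
  obtain ⟨hlam0, hlam1⟩ := hlam
  set K : ℕ := ⌈lam * (2 * (n : ℝ))⌉₊ - 1 with hKdef
  have hnn : (2:ℝ) ≤ (n:ℝ) := by exact_mod_cast hn
  set b : ℝ := (2 * (n : ℝ) - 1) ^ (d : ℝ) with hbdef
  have hb0 : (0:ℝ) < b := Real.rpow_pos_of_pos (by linarith) d
  have h2lam : (2:ℝ) ≤ 2 / lam := by
    rw [le_div_iff₀ hlam0]; nlinarith
  have hb2 : (2:ℝ) ≤ b := le_trans h2lam hdens
  have hblt : b < 2 * (n:ℝ) - 1 := by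
    calc b < (2*(n:ℝ)-1) ^ (1:ℝ) :=
          Real.rpow_lt_rpow_of_exponent_lt (by linarith) hd1
    _ = 2*(n:ℝ)-1 := Real.rpow_one _
  have hdens' : (2:ℝ) ≤ lam * b := by
    rw [div_le_iff₀ hlam0] at hdens; linarith [hdens]
  have hlamb : (2:ℝ) < lam * (2 * (n:ℝ)) := by nlinarith
  have hceil3 : 3 ≤ ⌈lam * (2 * (n:ℝ))⌉₊ := by
    have h2 : ((2:ℕ):ℝ) < lam * (2 * (n:ℝ)) := by push_cast; linarith
    have := Nat.lt_ceil.mpr h2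
    omega
  have hK2 : 2 ≤ K := by omega
  have hKR : (2:ℝ) ≤ (K:ℝ) := by exact_mod_cast hK2
  have hKup : lam * (2 * (n:ℝ)) ≤ (K:ℝ) + 1 := by
    have h := Nat.le_ceil (lam * (2 * (n:ℝ)))
    have heq : (⌈lam * (2 * (n:ℝ))⌉₊ : ℝ) = (K:ℝ) + 1 := by
      rw [hKdef]
      push_cast [Nat.cast_sub (by omega : 1 ≤ ⌈lam * (2 * (n:ℝ))⌉₊)]
      ring
    linarith [heq ▸ h]
  have h4n : 4*(n:ℝ) ≤ ((K:ℝ)+1) * b := by nlinarith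
  have hbase : (4:ℝ)/3 ≤ b * (K:ℝ) / (2 * (n:ℝ)) := by
    rw [le_div_iff₀ (by linarith)]
    nlinarith [mul_nonneg (show (0:ℝ) ≤ 3*(K:ℝ) by linarith)
      (show (0:ℝ) ≤ ((K:ℝ)+1)*b - 4*(n:ℝ) by linarith)]
  have hmain : ∀ᶠ l : ℕ in atTop,
      1 - Real.exp (-(c/2 * (4/3:ℝ)^l)) ≤ hitProb n d L l := by
    filter_upwards [hgrowth] with l hg
    rw [hitProb_eq n (by omega) d L l]
    set N := numRelators n d l with hNdef
    set R := (Nat.card ↥(RW n l) : ℝ) with hRdef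
    set m := (Nat.card ↥(L ∩ RW n l) : ℝ) with hmdef
    set q := (Nat.card {w : ↥(RW n l) // ↑w ∉ L} : ℝ) with hqdef
    have hR0 : (0:ℝ) < R := by
      rw [hRdef]; exact_mod_cast rw_card_pos n l (by omega)
    have hmq : m + q = R := by
      rw [hmdef, hqdef, hRdef]
      exact_mod_cast (card_mem_eq n l L) ▸ (card_split n l L)
    have hq0 : (0:ℝ) ≤ q := Nat.cast_nonneg _
    have hm0 : (0:ℝ) ≤ m := Nat.cast_nonneg _
    have hRle : R ≤ (2*(n:ℝ))^l := by
      rw [hRdef]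
      calc (Nat.card ↥(RW n l) : ℝ) ≤ ((2*n)^l : ℕ) := by exact_mod_cast rw_card_le n l
        _ = (2*(n:ℝ))^l := by push_cast; ring
    have hx : c * (K:ℝ)^l / (2*(n:ℝ))^l ≤ m / R :=
      div_le_div₀ hm0 hg hR0 hRle
    have hbl1 : (1:ℝ) ≤ b ^ l := one_le_pow₀ (by linarith : (1:ℝ) ≤ b)
    have hNy : b ^ l / 2 ≤ (N:ℝ) := by
      have hdl : (2*(n:ℝ)-1) ^ (d * (l:ℝ)) = b ^ l := by
        rw [hbdef, ← Real.rpow_natCast ((2*(n:ℝ)-1) ^ (d:ℝ)) l, ← Real.rpow_mul (by linarith)]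
      have hfl : b^l - 1 < (N:ℝ) := by
        have := Nat.sub_one_lt_floor ((2*(n:ℝ)-1) ^ (d * (l:ℝ)))
        rw [hdl] at this
        simpa [hNdef, numRelators, hdl] using this
      rcases le_or_gt (b^l) 2 with h | h
      · have h1N : 1 ≤ N := by
          rw [hNdef]
          exact Nat.le_floor (by rw [hdl]; exact_mod_cast hbl1)
        have : (1:ℝ) ≤ (N:ℝ) := by exact_mod_cast h1N
        linarith
      · linarith
    have hqR : q / R = 1 - m / R := by
      field_simp
      linarith
    have hexp1 : q / R ≤ Real.exp (-(m/R)) := by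
      rw [hqR]
      linarith [Real.add_one_le_exp (-(m/R))]
    have hqR0 : (0:ℝ) ≤ q / R := div_nonneg hq0 hR0.le
    have hNx : c/2 * (4/3:ℝ)^l ≤ (N:ℝ) * (m/R) := by
      calc c/2 * (4/3:ℝ)^l ≤ c/2 * (b * (K:ℝ) / (2*(n:ℝ)))^l :=
            mul_le_mul_of_nonneg_left
              (pow_le_pow_left₀ (by norm_num) hbase l) (by linarith)
      _ = (b^l/2) * (c * (K:ℝ)^l / (2*(n:ℝ))^l) := by
            rw [div_pow, mul_pow]
            field_simp
      _ ≤ (N:ℝ) * (m/R) :=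
            mul_le_mul hNy hx (by positivity) (Nat.cast_nonneg N)
    have hfinal : (q/R)^N ≤ Real.exp (-(c/2 * (4/3:ℝ)^l)) := by
      calc (q/R)^N ≤ Real.exp (-(m/R)) ^ N := pow_le_pow_left₀ hqR0 hexp1 N
        _ = Real.exp (-((N:ℝ) * (m/R))) := by
            rw [← Real.exp_nat_mul]; ring_nf
        _ ≤ Real.exp (-(c/2 * (4/3:ℝ)^l)) := by
            apply Real.exp_le_exp.mpr; linarith
    linarith
  have hub : ∀ᶠ l : ℕ in atTop, hitProb n d L l ≤ 1 := by
    filter_upwards with l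
    rw [hitProb_eq n (by omega) d L l]
    have : (0:ℝ) ≤ ((Nat.card {w : ↥(RW n l) // ↑w ∉ L} : ℝ) / (Nat.card ↥(RW n l) : ℝ))
        ^ (numRelators n d l) := by positivity
    linarith
  have hlow : Tendsto (fun l : ℕ => 1 - Real.exp (-(c/2 * (4/3:ℝ)^l))) atTop (𝓝 1) := by
    have h1 : Tendsto (fun l : ℕ => c/2 * (4/3:ℝ)^l) atTop atTop :=
      (tendsto_pow_atTop_atTop_of_one_lt (by norm_num : (1:ℝ) < 4/3)).const_mul_atTop
        (by linarith)
    have h2 : Tendsto (fun l : ℕ => Real.exp (-(c/2 * (4/3:ℝ)^l))) atTop (𝓝 0) :=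
      Real.tendsto_exp_atBot.comp (tendsto_neg_atBot_iff.mpr h1)
    simpa using tendsto_const_nhds.sub h2
  exact tendsto_of_tendsto_of_tendsto_of_le_of_le' hlow tendsto_const_nhds hmain hub
end

section
/- Let S be a set of n ≥ 1 generators, B ≥ 1, 1 ≤ P < B, and = R_B the alphabet of all reduced words of length B over S. Let λ satisfy 1/(2n) < λ ≤ 1 and let Σ̂ be an Â-automaton with λ·2n̂-growth, where 2n̂ = 2n(2n−1)^{B−1}. For L of the form L = B·L̂ + P, let 𝒫_P be the set of reduced words over S of length L whose initial subword of length L − P is the concatenation of a word accepted by Σ̂ that is reduced over S. Then, with m = (λ − 1/(2n))^{1/B}·(2n−1), there exists c > 0 such that |𝒫_P| ≥ c·m^L for all but finitely many L of the form B·L̂ + P. -/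
open Filter Topology

/-- Inversion of words (inversion in the free group `F_S`), the involution on the
alphabet `Â = R_B`. -/
def wInv {n : ℕ} (w : List (Letter n)) : List (Letter n) :=
  (w.map linv).reverse

/-- Running an automaton with partial transition function `δ` from a state, reading a word. -/
def run {A Q : Type} (δ : Q → A → Option Q) : Q → List A → Option Q
  | q, [] => some q
  | q, a :: w => (δ q a).bind fun q' => run δ q' w

/-! ### Auxiliary definitions and lemmas -/

instance {n : ℕ} (w : List (Letter n)) : Decidable (Reduced w) :=
  inferInstanceAs (Decidable (w.IsChain _))

/-- Reduced words of length `m` that can follow the letter `ℓ`. -/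
def extFinset (n : ℕ) (ℓ : Letter n) : ℕ → Finset (List (Letter n))
  | 0 => {[]}
  | m + 1 => (Finset.univ.filter (· ≠ linv ℓ)).biUnion
      fun a => (extFinset n a m).image (a :: ·)

lemma mem_extFinset {n : ℕ} {ℓ : Letter n} : ∀ {m : ℕ} {t : List (Letter n)},
    t ∈ extFinset n ℓ m ↔ t.length = m ∧ Reduced (ℓ :: t) := by
  intro m
  induction m generalizing ℓ with
  | zero =>
    intro t
    simp [extFinset, Reduced]
    rintro rfl; simp [List.Chain']
  | succ m ih =>
    intro t
    simp only [extFinset, Finset.mem_biUnion, Finset.mem_filter, Finset.mem_univ, true_and,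
      Finset.mem_image]
    constructor
    · rintro ⟨a, ha, s, hs, rfl⟩
      obtain ⟨hlen, hred⟩ := ih.1 hs
      refine ⟨by simp [hlen], ?_⟩
      unfold Reduced at hred ⊢
      rw [List.Chain', List.isChain_cons]
      exact ⟨by simpa using ha, hred⟩
    · rintro ⟨hlen, hred⟩
      match t with
      | a :: s =>
        unfold Reduced at hred
        rw [List.Chain', List.isChain_cons] at hred
        exact ⟨a, by simpa using hred.1, s, ih.2 ⟨by simpa using hlen, hred.2⟩, rfl⟩

lemma card_letter (n : ℕ) : Fintype.card (Letter n) = 2 * n := by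
  simp [Fintype.card_prod, two_mul]; ring

lemma card_extFinset {n : ℕ} (ℓ : Letter n) : ∀ m : ℕ,
    (extFinset n ℓ m).card = (2 * n - 1) ^ m := by
  intro m
  induction m generalizing ℓ with
  | zero => simp [extFinset]
  | succ m ih =>
    rw [extFinset, Finset.card_biUnion]
    · have : ∀ a ∈ Finset.univ.filter (· ≠ linv ℓ),
          ((extFinset n a m).image (a :: ·)).card = (2 * n - 1) ^ m := by
        intro a _
        rw [Finset.card_image_of_injective _ (by intro x y h; simpa using h), ih]
      rw [Finset.sum_congr rfl this, Finset.sum_const, Finset.filter_ne',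
        Finset.card_erase_of_mem (Finset.mem_univ _), Finset.card_univ, card_letter,
        smul_eq_mul, pow_succ, mul_comm]
    · intro a _ b _ hab
      simp only [Finset.disjoint_left, Finset.mem_image]
      rintro x ⟨s, _, rfl⟩ ⟨s', _, h⟩
      exact hab (by injection h with h1 _; exact h1.symm) |>.elim

/-- All reduced words of length `m`. -/
def redFinset (n : ℕ) : ℕ → Finset (List (Letter n))
  | 0 => {[]}
  | m + 1 => Finset.univ.biUnion fun a : Letter n => (extFinset n a m).image (a :: ·)

lemma mem_redFinset {n m : ℕ} {w : List (Letter n)} :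
    w ∈ redFinset n m ↔ w.length = m ∧ Reduced w := by
  cases m with
  | zero =>
    simp [redFinset, Reduced]
    rintro rfl; simp [List.Chain']
  | succ m =>
    simp only [redFinset, Finset.mem_biUnion, Finset.mem_univ, true_and, Finset.mem_image]
    constructor
    · rintro ⟨a, s, hs, rfl⟩
      obtain ⟨hlen, hred⟩ := mem_extFinset.1 hs
      exact ⟨by simp [hlen], hred⟩
    · rintro ⟨hlen, hred⟩
      match w with
      | a :: s => exact ⟨a, s, mem_extFinset.2 ⟨by simpa using hlen, hred⟩, rfl⟩

/-- Sequences of `k` reduced words of length `B`. -/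
def seqFinset (n B : ℕ) : ℕ → Finset (List (List (Letter n)))
  | 0 => {[]}
  | k + 1 => (redFinset n B).biUnion fun a => (seqFinset n B k).image (a :: ·)

lemma mem_seqFinset {n B : ℕ} : ∀ {k : ℕ} {q : List (List (Letter n))},
    q ∈ seqFinset n B k ↔ q.length = k ∧ ∀ a ∈ q, a ∈ redFinset n B := by
  intro k
  induction k with
  | zero => intro q; simp [seqFinset]; rintro rfl; simp
  | succ k ih =>
    intro q
    simp only [seqFinset, Finset.mem_biUnion, Finset.mem_image]
    constructor
    · rintro ⟨a, ha, s, hs, rfl⟩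
      obtain ⟨hlen, hmem⟩ := ih.1 hs
      refine ⟨by simp [hlen], ?_⟩
      intro b hb
      rcases List.mem_cons.1 hb with rfl | hb
      · exact ha
      · exact hmem b hb
    · rintro ⟨hlen, hmem⟩
      match q with
      | a :: s =>
        exact ⟨a, hmem a (List.mem_cons_self), s,
          ih.2 ⟨by simpa using hlen, fun b hb => hmem b (List.mem_cons_of_mem _ hb)⟩, rfl⟩

lemma run_append {A Q : Type} (δ : Q → A → Option Q) (v : Q) (l₁ l₂ : List A) :
    run δ v (l₁ ++ l₂) = (run δ v l₁).bind fun u => run δ u l₂ := by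
  induction l₁ generalizing v with
  | nil => simp [run]
  | cons a l ih =>
    simp only [List.cons_append, run]
    cases δ v a with
    | none => simp
    | some u => simp [ih]

lemma flatten_length {n B : ℕ} {q : List (List (Letter n))}
    (h : ∀ a ∈ q, a.length = B) : q.flatten.length = B * q.length := by
  induction q with
  | nil => simp
  | cons a s ih =>
    simp only [List.flatten_cons, List.length_append, List.length_cons]
    rw [ih (fun b hb => h b (List.mem_cons_of_mem _ hb)), h a (List.mem_cons_self)]
    ring

lemma flatten_inj {n B : ℕ} : ∀ {q q' : List (List (Letter n))},
    (∀ a ∈ q, a.length = B) → (∀ a ∈ q', a.length = B) → q.length = q'.length →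
    q.flatten = q'.flatten → q = q' := by
  intro q
  induction q with
  | nil =>
    intro q' _ _ hlen _
    exact (List.length_eq_zero_iff.1 hlen.symm).symm ▸ rfl
  | cons a s ih =>
    intro q' h h' hlen hfl
    match q' with
    | a' :: s' =>
      simp only [List.flatten_cons] at hfl
      have ha : a.length = a'.length := by
        rw [h a (List.mem_cons_self), h' a' (List.mem_cons_self)]
      obtain ⟨h1, h2⟩ := List.append_inj hfl ha
      have := ih (fun b hb => h b (List.mem_cons_of_mem _ hb))
        (fun b hb => h' b (List.mem_cons_of_mem _ hb)) (by simpa using hlen) h2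
      rw [h1, this]

/-- If every fiber of `f : β → α` has at least `K` elements, then `|α| * K ≤ |β|`. -/
lemma card_mul_le_of_fibers {α β : Type*} [Finite β] (f : β → α) (K : ℕ)
    (h : ∀ a : α, K ≤ Nat.card {b // f b = a}) :
    Nat.card α * K ≤ Nat.card β := by
  have hemb : ∀ a : α, Nonempty (Fin K ↪ {b // f b = a}) := by
    intro a
    have : Finite {b // f b = a} := Subtype.finite
    have := Fintype.ofFinite {b // f b = a}
    apply Function.Embedding.nonempty_of_card_le
    simpa [Nat.card_eq_fintype_card] using h a
  have hg : Function.Injective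
      (fun p : α × Fin K => (((hemb p.1).some p.2).val : β)) := by
    rintro ⟨a, i⟩ ⟨a', i'⟩ hgg
    simp only at hgg
    have ha : a = a' := by
      have h1 := ((hemb a).some i).property
      have h2 := ((hemb a').some i').property
      rw [← h1, ← h2, hgg]
    subst ha
    have : (hemb a).some i = (hemb a).some i' := Subtype.ext hgg
    rw [(hemb a).some.injective this]
  calc Nat.card α * K = Nat.card (α × Fin K) := by simp [Nat.card_prod]
    _ ≤ Nat.card β := Nat.card_le_card_of_injective _ hg

/-- Compatibility of a junction: the pair (last letter of previous word, first letter of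
the next word) is not a cancellation. -/
def goodPair {n : ℕ} : Option (Letter n) → Option (Letter n) → Bool
  | some x, some y => !(y == linv x)
  | _, _ => true

lemma goodPair_iff {n : ℕ} (o₁ o₂ : Option (Letter n)) :
    goodPair o₁ o₂ = true ↔ ∀ x ∈ o₁, ∀ y ∈ o₂, y ≠ linv x := by
  cases o₁ <;> cases o₂ <;> simp [goodPair]

/-- Accepted sequences of `k` blocks with reduced concatenation. -/
def Tfin (n B : ℕ) {Q : Type} (δ : Q → List (Letter n) → Option Q) (v0 : Q) (k : ℕ) :
    Finset (List (List (Letter n))) :=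
  (seqFinset n B k).filter fun q => (run δ v0 q).isSome ∧ Reduced q.flatten

lemma mem_Tfin {n B : ℕ} {Q : Type} {δ : Q → List (Letter n) → Option Q} {v0 : Q} {k : ℕ}
    {q : List (List (Letter n))} :
    q ∈ Tfin n B δ v0 k ↔
      (q.length = k ∧ ∀ a ∈ q, a ∈ redFinset n B) ∧
        (run δ v0 q).isSome ∧ Reduced q.flatten := by
  simp [Tfin, mem_seqFinset]

lemma Tfin_step (n B : ℕ) {Q : Type} [Finite Q] (δ : Q → List (Letter n) → Option Q)
    (v0 : Q) (K : ℕ)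
    (hK : ∀ v : Q, K + (2 * n - 1) ^ (B - 1) ≤
      ((redFinset n B).filter fun blk => (δ v blk).isSome).card)
    (k : ℕ) :
    (Tfin n B δ v0 k).card * K ≤ (Tfin n B δ v0 (k + 1)).card := by
  rw [← Nat.card_eq_finsetCard (Tfin n B δ v0 k),
    ← Nat.card_eq_finsetCard (Tfin n B δ v0 (k + 1))]
  -- the "drop the last block" map
  have hmem : ∀ b : ↥(Tfin n B δ v0 (k + 1)), b.val.dropLast ∈ Tfin n B δ v0 k := by
    rintro ⟨q, hq⟩
    rw [mem_Tfin] at hq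
    obtain ⟨⟨hlen, hblocks⟩, hrun, hred⟩ := hq
    have hne : q ≠ [] := by rintro rfl; simp at hlen
    have hdec : q.dropLast ++ [q.getLast hne] = q := List.dropLast_append_getLast hne
    rw [mem_Tfin]
    refine ⟨⟨by simp [hlen], fun a ha => hblocks a (List.dropLast_sublist q |>.mem ha)⟩, ?_, ?_⟩
    · have := run_append δ v0 q.dropLast [q.getLast hne]
      rw [hdec] at this
      rw [Option.isSome_iff_exists] at hrun
      obtain ⟨v, hv⟩ := hrun
      rw [hv] at this
      cases hdl : run δ v0 q.dropLast with
      | none => rw [hdl] at this; simp at this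
      | some u => simp
    · have : q.flatten = q.dropLast.flatten ++ (q.getLast hne) := by
        conv_lhs => rw [← hdec]
        simp
      rw [this] at hred
      exact hred.left_of_append
  apply card_mul_le_of_fibers (fun b : ↥(Tfin n B δ v0 (k + 1)) =>
    (⟨b.val.dropLast, hmem b⟩ : ↥(Tfin n B δ v0 k)))
  rintro ⟨q, hq⟩
  obtain ⟨⟨hlen, hblocks⟩, hrun, hred⟩ := mem_Tfin.1 hq
  rw [Option.isSome_iff_exists] at hrun
  obtain ⟨v, hv⟩ := hrun
  -- the set of good continuation blocks
  set goodA := (redFinset n B).filter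
    (fun blk => (δ v blk).isSome ∧ goodPair q.flatten.getLast? blk.head? = true) with hgoodA
  -- lower bound on the number of good blocks
  have hcard : K ≤ goodA.card := by
    set dom := (redFinset n B).filter (fun blk => (δ v blk).isSome) with hdom'
    have hsplit : (dom.filter fun blk => goodPair q.flatten.getLast? blk.head? = true).card
        + (dom.filter fun blk => ¬ goodPair q.flatten.getLast? blk.head? = true).card
        = dom.card := Finset.card_filter_add_card_filter_not _
    have hgeq : goodA = dom.filter fun blk => goodPair q.flatten.getLast? blk.head? = true := by
      rw [hgoodA, hdom', Finset.filter_filter]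
    have hbad : (dom.filter fun blk => ¬ goodPair q.flatten.getLast? blk.head? = true).card
        ≤ (2 * n - 1) ^ (B - 1) := by
      cases hlast : q.flatten.getLast? with
      | none =>
        have h0 : (dom.filter fun blk => ¬ goodPair (none : Option (Letter n)) blk.head? = true)
            = ∅ := by
          rw [Finset.filter_eq_empty_iff]
          intro blk _
          simp [goodPair]
        rw [h0]
        simp
      | some x =>
        calc (dom.filter fun blk => ¬ goodPair (some x) blk.head? = true).card
            ≤ ((extFinset n (linv x) (B - 1)).image (linv x :: ·)).card := by
              apply Finset.card_le_card
              intro blk hblk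
              rw [Finset.mem_filter] at hblk
              obtain ⟨hblkdom, hbad⟩ := hblk
              rw [hdom', Finset.mem_filter, mem_redFinset] at hblkdom
              obtain ⟨⟨hblen, hbred⟩, _⟩ := hblkdom
              cases hhd : blk.head? with
              | none => rw [hhd] at hbad; simp [goodPair] at hbad
              | some y =>
                rw [hhd] at hbad
                have hy : y = linv x := by
                  by_contra hcon
                  simp [goodPair, hcon] at hbad
                subst hy
                match blk, hhd with
                | b :: t, hhd =>
                  simp only [List.head?_cons, Option.some_inj] at hhd
                  subst hhd
                  rw [Finset.mem_image]
                  refine ⟨t, mem_extFinset.2 ⟨?_, hbred⟩, rfl⟩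
                  simp only [List.length_cons] at hblen
                  omega
            _ ≤ (2 * n - 1) ^ (B - 1) := by
              apply le_trans (Finset.card_image_le)
              rw [card_extFinset]
    have hdomc := hK v
    rw [← hdom'] at hdomc
    rw [hgeq]
    omega
  -- each good block extends q to an element of the fiber
  have hext : ∀ blk ∈ goodA, q ++ [blk] ∈ Tfin n B δ v0 (k + 1) := by
    intro blk hblk
    rw [hgoodA, Finset.mem_filter] at hblk
    obtain ⟨hbrw, hbsome, hbgood⟩ := hblk
    obtain ⟨hblen, hbred⟩ := mem_redFinset.1 hbrw
    rw [mem_Tfin]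
    refine ⟨⟨by simp [hlen], ?_⟩, ?_, ?_⟩
    · intro a ha
      rcases List.mem_append.1 ha with h | h
      · exact hblocks a h
      · rw [List.mem_singleton.1 h]; exact hbrw
    · rw [run_append, hv]
      obtain ⟨u, hu⟩ := Option.isSome_iff_exists.1 hbsome
      simp [run, hu]
    · rw [List.flatten_append, List.flatten_cons, List.flatten_nil, List.append_nil]
      exact List.IsChain.append hred hbred (goodPair_iff _ _ |>.1 hbgood)
  refine le_trans hcard ?_
  rw [← Nat.card_eq_finsetCard goodA]
  apply Nat.card_le_card_of_injective
    (f := fun blk : ↥goodA =>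
      (⟨⟨q ++ [blk.val], hext _ blk.property⟩, by
        apply Subtype.ext
        simp⟩ :
      {b : ↥(Tfin n B δ v0 (k + 1)) //
        (⟨b.val.dropLast, hmem b⟩ : ↥(Tfin n B δ v0 k)) = ⟨q, hq⟩}))
  rintro ⟨blk, hblk⟩ ⟨blk', hblk'⟩ h
  simp only [Subtype.mk.injEq, List.append_cancel_left_eq, List.cons.injEq] at h
  exact Subtype.ext h.1

lemma Tfin_zero (n B : ℕ) {Q : Type} (δ : Q → List (Letter n) → Option Q) (v0 : Q) :
    Tfin n B δ v0 0 = {[]} := by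
  ext q
  rw [mem_Tfin, Finset.mem_singleton]
  constructor
  · rintro ⟨⟨hlen, -⟩, -, -⟩
    exact List.length_eq_zero_iff.1 hlen
  · rintro rfl
    exact ⟨⟨rfl, by simp⟩, by simp [run], by simp [Reduced, List.Chain']⟩

lemma getLast?_eq_getLastD {α : Type*} (l : List α) (d : α) (h : l ≠ []) :
    l.getLast? = some (l.getLastD d) := by
  rw [List.getLastD_eq_getLast?]
  cases hl : l.getLast? with
  | none => exact absurd (List.getLast?_eq_none_iff.1 hl) h
  | some x => rfl

/-- The final set of words. -/
def Wfin (n B P : ℕ) {Q : Type} (δ : Q → List (Letter n) → Option Q) (v0 : Q) (d : Letter n)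
    (k : ℕ) : Finset (List (Letter n)) :=
  (Tfin n B δ v0 k).biUnion fun q =>
    (extFinset n (q.flatten.getLastD d) P).image (q.flatten ++ ·)

lemma blocks_length {n B : ℕ} {q : List (List (Letter n))}
    (h : ∀ a ∈ q, a ∈ redFinset n B) : ∀ a ∈ q, a.length = B :=
  fun a ha => (mem_redFinset.1 (h a ha)).1

lemma Wfin_card (n B P : ℕ) {Q : Type} (δ : Q → List (Letter n) → Option Q) (v0 : Q)
    (d : Letter n) (k : ℕ) :
    (Tfin n B δ v0 k).card * (2 * n - 1) ^ P ≤ (Wfin n B P δ v0 d k).card := by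
  rw [Wfin, Finset.card_biUnion]
  · apply le_of_eq
    rw [Finset.sum_congr rfl (fun q _ => ?_), Finset.sum_const, smul_eq_mul]
    rw [Finset.card_image_of_injective _ (fun t t' h => List.append_cancel_left h),
      card_extFinset]
  · intro q hq q' hq' hne
    simp only [Finset.disjoint_left, Finset.mem_image]
    rintro w ⟨t, ht, rfl⟩ ⟨t', ht', heq⟩
    obtain ⟨⟨hlen, hblocks⟩, -, -⟩ := mem_Tfin.1 hq
    obtain ⟨⟨hlen', hblocks'⟩, -, -⟩ := mem_Tfin.1 hq'
    have h1 : q.flatten.length = q'.flatten.length := by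
      rw [flatten_length (blocks_length hblocks), flatten_length (blocks_length hblocks'),
        hlen, hlen']
    have h2 : q.flatten = q'.flatten := (List.append_inj heq h1.symm).1.symm
    exact hne (flatten_inj (blocks_length hblocks) (blocks_length hblocks')
      (by rw [hlen, hlen']) h2)

lemma Wfin_mem (n B P : ℕ) (hB : 1 ≤ B) {Q : Type} (δ : Q → List (Letter n) → Option Q)
    (v0 : Q) (d : Letter n) (k : ℕ) (hk : 1 ≤ k) (w : List (Letter n))
    (hw : w ∈ Wfin n B P δ v0 d k) :
    w.length = B * k + P ∧ Reduced w ∧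
      ∃ q : List (List (Letter n)), (run δ v0 q).isSome ∧ Reduced q.flatten ∧
        w.take (B * k) = q.flatten := by
  rw [Wfin, Finset.mem_biUnion] at hw
  obtain ⟨q, hq, hw⟩ := hw
  rw [Finset.mem_image] at hw
  obtain ⟨t, ht, rfl⟩ := hw
  obtain ⟨⟨hlen, hblocks⟩, hrun, hred⟩ := mem_Tfin.1 hq
  obtain ⟨htlen, htred⟩ := mem_extFinset.1 ht
  have hfl : q.flatten.length = B * k := by rw [flatten_length (blocks_length hblocks), hlen]
  have hfne : q.flatten ≠ [] := by
    intro h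
    rw [h] at hfl
    simp at hfl
    omega
  refine ⟨by simp [hfl, htlen], ?_, q, hrun, hred, List.take_left' hfl⟩
  apply List.IsChain.append hred (List.isChain_cons.1 htred).2
  intro x hx y hy
  rw [getLast?_eq_getLastD q.flatten d hfne, Option.mem_def, Option.some_inj] at hx
  subst hx
  exact (List.isChain_cons.1 htred).1 y hy

/-- Let `Σ̂` be an automaton over the alphabet `Â = R_B` (with the immersion condition)
with `λ·2n̂`-growth, `1/(2n) < λ ≤ 1`, and let `1 ≤ P < B`. For `L = B·L̂ + P`, the
prefix set `𝒫_P` of reduced words over `S` of length `L` whose initial subword of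
length `L - P` is the concatenation of an accepted word of `Σ̂` that is reduced over `S`
satisfies `|𝒫_P| ≥ c·m^L` with `m = (λ - 1/(2n))^(1/B)·(2n-1)`, for some `c > 0` and
all but finitely many such `L`. -/
theorem prefix_set_growth (n B P : ℕ) (hn : 1 ≤ n) (hB : 1 ≤ B)
    (hP1 : 1 ≤ P) (hPB : P < B)
    (Q : Type) [Finite Q] (v0 : Q)
    (δ : Q → List (Letter n) → Option Q)
    (hdom : ∀ q a, (δ q a).isSome → a ∈ RW n B)
    (himm : ∀ u a v, δ u a = some v → δ v (wInv a) = none)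
    (lam : ℝ) (hlam1 : 1 / (2 * (n : ℝ)) < lam) (hlam2 : lam ≤ 1)
    (hgrow : ∀ q : Q,
      lam * ((2 * n * (2 * n - 1) ^ (B - 1) : ℕ) : ℝ) ≤
        (Nat.card {a : List (Letter n) // (δ q a).isSome} : ℝ)) :
    ∃ c : ℝ, 0 < c ∧ ∀ᶠ Lhat : ℕ in atTop,
      c * ((lam - 1 / (2 * (n : ℝ))) ^ ((1 : ℝ) / (B : ℝ)) * (2 * (n : ℝ) - 1)) ^
          (B * Lhat + P) ≤
        (Nat.card {w : List (Letter n) //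
          w.length = B * Lhat + P ∧ Reduced w ∧
          ∃ q : List (List (Letter n)), (run δ v0 q).isSome ∧ Reduced q.flatten ∧
            w.take (B * Lhat) = q.flatten} : ℝ) := by
  classical
  have hn0 : (0 : ℝ) < n := by exact_mod_cast hn
  set F : ℕ := (2 * n - 1) ^ (B - 1) with hF
  set Nh : ℕ := 2 * n * (2 * n - 1) ^ (B - 1) with hNh
  have hF1 : 1 ≤ F := Nat.one_le_pow _ _ (by omega)
  have h2n1 : ((2 * n - 1 : ℕ) : ℝ) = 2 * (n : ℝ) - 1 := by
    rw [Nat.cast_sub (by omega : 1 ≤ 2 * n)]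
    push_cast
    ring
  set y : ℝ := 2 * (n : ℝ) - 1 with hy
  have hy0 : (0 : ℝ) ≤ y := by rw [hy]; linarith
  have hy2n : y ≤ 2 * (n : ℝ) := by rw [hy]; linarith
  have hFR : (F : ℝ) = y ^ (B - 1) := by rw [hF]; push_cast [h2n1]; ring
  have hNhR : (Nh : ℝ) = 2 * (n : ℝ) * (F : ℝ) := by rw [hNh, hF]; push_cast; ring
  set x : ℝ := lam - 1 / (2 * (n : ℝ)) with hx
  have hx0 : (0 : ℝ) < x := by rw [hx]; linarith
  have hx1 : x ≤ 1 := by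
    have : (0 : ℝ) < 1 / (2 * (n : ℝ)) := by positivity
    rw [hx]; linarith
  set K : ℕ := ⌈lam * Nh⌉₊ - F with hK
  -- the growth hypothesis as a Finset card bound
  have hdomcard : ∀ v : Q,
      lam * (Nh : ℝ) ≤ (((redFinset n B).filter fun a => (δ v a).isSome).card : ℝ) := by
    intro v
    have hseteq : {a : List (Letter n) | (δ v a).isSome} =
        ↑((redFinset n B).filter fun a => (δ v a).isSome) := by
      ext a
      simp only [Set.mem_setOf_eq, Finset.coe_filter, mem_redFinset]
      constructor
      · intro h
        exact ⟨⟨(hdom v a h).1, (hdom v a h).2⟩, h⟩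
      · rintro ⟨-, h⟩
        exact h
    have hcardeq : Nat.card {a : List (Letter n) // (δ v a).isSome} =
        ((redFinset n B).filter fun a => (δ v a).isSome).card := by
      calc Nat.card {a : List (Letter n) // (δ v a).isSome}
          = Nat.card {a : List (Letter n) | (δ v a).isSome} := rfl
        _ = ((redFinset n B).filter fun a => (δ v a).isSome).card := by
            rw [Nat.card_coe_set_eq, hseteq, Set.ncard_coe_finset]
    have := hgrow v
    rw [hcardeq] at this
    exact_mod_cast this
  have hFlam : (F : ℝ) ≤ lam * Nh := by
    have h1 : (0 : ℝ) ≤ 2 * (n : ℝ) * (F : ℝ) := by positivity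
    have h2 := mul_le_mul_of_nonneg_right hlam1.le h1
    have h3 : 1 / (2 * (n : ℝ)) * (2 * (n : ℝ) * (F : ℝ)) = (F : ℝ) := by
      field_simp
    rw [hNhR]
    linarith
  have hFceil : F ≤ ⌈lam * Nh⌉₊ := by
    have := Nat.le_ceil (lam * (Nh : ℝ))
    have : (F : ℝ) ≤ (⌈lam * Nh⌉₊ : ℝ) := le_trans hFlam this
    exact_mod_cast this
  have hKstep : ∀ v : Q, K + (2 * n - 1) ^ (B - 1) ≤
      ((redFinset n B).filter fun blk => (δ v blk).isSome).card := by
    intro v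
    have h1 := hdomcard v
    have h2 : ⌈lam * Nh⌉₊ ≤ ((redFinset n B).filter fun a => (δ v a).isSome).card :=
      Nat.ceil_le.2 h1
    rw [hK, ← hF]
    omega
  have hKR : x * (2 * (n : ℝ)) * (F : ℝ) ≤ (K : ℝ) := by
    have h1 : (K : ℝ) = (⌈lam * Nh⌉₊ : ℝ) - (F : ℝ) := by
      rw [hK, Nat.cast_sub hFceil]
    have h2 := Nat.le_ceil (lam * (Nh : ℝ))
    have h3 : x * (2 * (n : ℝ)) = lam * (2 * (n : ℝ)) - 1 := by
      rw [hx]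
      field_simp
    rw [h1, hNhR] at *
    nlinarith
  have hxyK : x * y ^ B ≤ (K : ℝ) := by
    have hsplit : y ^ B = y ^ (B - 1) * y := by
      rw [← pow_succ]
      congr 1
      omega
    have h1 : x * y ^ B ≤ x * (2 * (n : ℝ)) * y ^ (B - 1) := by
      rw [hsplit]
      have := mul_le_mul_of_nonneg_left hy2n (le_of_lt hx0)
      nlinarith [pow_nonneg hy0 (B - 1)]
    rw [← hFR] at h1
    linarith
  -- the inductive lower bound on the number of accepted sequences
  have hKpow : ∀ k : ℕ, K ^ k ≤ (Tfin n B δ v0 k).card := by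
    intro k
    induction k with
    | zero => simp [Tfin_zero]
    | succ k ih =>
      calc K ^ (k + 1) = K ^ k * K := by ring
        _ ≤ (Tfin n B δ v0 k).card * K := Nat.mul_le_mul_right _ ih
        _ ≤ (Tfin n B δ v0 (k + 1)).card := Tfin_step n B δ v0 K hKstep k
  set d : Letter n := (⟨0, hn⟩, true) with hd
  refine ⟨1, one_pos, ?_⟩
  filter_upwards [eventually_ge_atTop 1] with Lhat hL1
  rw [one_mul]
  -- the natural-number count
  have hfinW : Finite {w : List (Letter n) //
      w.length = B * Lhat + P ∧ Reduced w ∧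
      ∃ q : List (List (Letter n)), (run δ v0 q).isSome ∧ Reduced q.flatten ∧
        w.take (B * Lhat) = q.flatten} :=
    Set.Finite.to_subtype (Set.Finite.subset (List.finite_length_eq (Letter n) (B * Lhat + P))
      (fun w hw => hw.1))
  have hnat : K ^ Lhat * (2 * n - 1) ^ P ≤
      Nat.card {w : List (Letter n) //
        w.length = B * Lhat + P ∧ Reduced w ∧
        ∃ q : List (List (Letter n)), (run δ v0 q).isSome ∧ Reduced q.flatten ∧
          w.take (B * Lhat) = q.flatten} := by
    calc K ^ Lhat * (2 * n - 1) ^ P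
        ≤ (Tfin n B δ v0 Lhat).card * (2 * n - 1) ^ P :=
          Nat.mul_le_mul_right _ (hKpow Lhat)
      _ ≤ (Wfin n B P δ v0 d Lhat).card := Wfin_card n B P δ v0 d Lhat
      _ = Nat.card ↥(Wfin n B P δ v0 d Lhat) := (Nat.card_eq_finsetCard _).symm
      _ ≤ _ := by
          apply Nat.card_le_card_of_injective
            (f := fun w : ↥(Wfin n B P δ v0 d Lhat) =>
              (⟨w.val, Wfin_mem n B P hB δ v0 d Lhat hL1 w.val w.property⟩ :
                {w : List (Letter n) //
                  w.length = B * Lhat + P ∧ Reduced w ∧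
                  ∃ q : List (List (Letter n)), (run δ v0 q).isSome ∧ Reduced q.flatten ∧
                    w.take (B * Lhat) = q.flatten}))
          rintro ⟨w, hw⟩ ⟨w', hw'⟩ h
          simp only [Subtype.mk.injEq] at h
          exact Subtype.ext h
  -- the real-number estimate
  have hrpow : (x ^ ((1 : ℝ) / (B : ℝ))) ^ (B * Lhat + P) =
      x ^ (((B * Lhat + P : ℕ) : ℝ) / (B : ℝ)) := by
    rw [← Real.rpow_natCast (x ^ ((1 : ℝ) / (B : ℝ))) (B * Lhat + P),
      ← Real.rpow_mul hx0.le, one_div, inv_mul_eq_div, div_eq_inv_mul, inv_mul_eq_div]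
  have hB0 : (0 : ℝ) < (B : ℝ) := by exact_mod_cast hB
  have hexp : x ^ (((B * Lhat + P : ℕ) : ℝ) / (B : ℝ)) ≤ x ^ Lhat := by
    rw [← Real.rpow_natCast x Lhat]
    apply Real.rpow_le_rpow_of_exponent_ge hx0 hx1
    rw [le_div_iff₀ hB0]
    push_cast
    nlinarith [Nat.cast_nonneg (α := ℝ) P]
  calc (x ^ ((1 : ℝ) / (B : ℝ)) * y) ^ (B * Lhat + P)
      = (x ^ ((1 : ℝ) / (B : ℝ))) ^ (B * Lhat + P) * y ^ (B * Lhat + P) := mul_pow _ _ _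
    _ ≤ x ^ Lhat * y ^ (B * Lhat + P) := by
        apply mul_le_mul_of_nonneg_right _ (pow_nonneg hy0 _)
        rw [hrpow]
        exact hexp
    _ = (x * y ^ B) ^ Lhat * y ^ P := by
        rw [pow_add, mul_pow, ← pow_mul]
        ring
    _ ≤ (K : ℝ) ^ Lhat * y ^ P := by
        apply mul_le_mul_of_nonneg_right _ (pow_nonneg hy0 _)
        exact pow_le_pow_left₀ (by positivity) hxyK Lhat
    _ = ((K ^ Lhat * (2 * n - 1) ^ P : ℕ) : ℝ) := by
        push_cast [h2n1]
        ring
    _ ≤ _ := by exact_mod_cast hnat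
end
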